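/- arXiv:2309.00078 — 2 statements merged into one kernel-verified Lean document; each statement's English description precedes it below -/
import Mathlib

section
/- For all imaginary octonions p, q with ⟨p,q⟩ = 0 and all z ∈ ℝ, a ∈ 𝕆: ½·[ad_{X_p}, ad_{X_q}](P(z,a)) = P(0, 2(⟨p,a⟩q − ⟨q,a⟩p)). In particular the nested operator D_{p,q} := ½[ad_{X_p}, ad_{X_q}] annihilates P(z,a) whenever ⟨a,p⟩ = ⟨a,q⟩ = 0, and is an infinitesimal rotation in the (p,q)-plane. -/
noncomputable section

abbrev H := Quaternion ℝ

/-- The octonions 𝕆, as the Cayley–Dickson double of the quaternions: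
pairs (a,b) of quaternions. -/
def Oct : Type := H × H

namespace Oct

instance : AddCommGroup Oct := inferInstanceAs (AddCommGroup (H × H))
instance : Module ℝ Oct := inferInstanceAs (Module ℝ (H × H))

def mk' (a b : H) : Oct := (a, b)
def fst : Oct → H := Prod.fst
def snd : Oct → H := Prod.snd

/-- Cayley–Dickson multiplication: (a,b)·(c,d) = (ac − conj(d)b, da + b·conj(c)). -/
instance : Mul Oct :=
  ⟨fun p q => mk' (p.fst * q.fst - star q.snd * p.snd) (q.snd * p.fst + p.snd * star q.fst)⟩

instance : One Oct := ⟨mk' 1 0⟩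

/-- Octonionic conjugation: conj (a,b) = (conj a, −b). -/
def conj (p : Oct) : Oct := mk' (star p.fst) (-p.snd)

/-- The real part of an octonion, as a real scalar. -/
def re (p : Oct) : ℝ := (p.fst).re

/-- The bilinear form ⟨x,y⟩ = (x·conj(y) + y·conj(x))/2, a real scalar. -/
def oinner (p q : Oct) : ℝ := re (p * conj q + q * conj p) / 2

/-- The norm N(x) = x·conj(x), a real scalar. -/
def N (p : Oct) : ℝ := re (p * conj p)

/-- An octonion is imaginary if conj x = −x. -/
def IsIm (p : Oct) : Prop := conj p = -p

/-- The embedding of the reals into the octonions. -/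
def oR (r : ℝ) : Oct := mk' (algebraMap ℝ H r) 0

end Oct

open Oct

abbrev M2 := Matrix (Fin 2) (Fin 2) Oct

/-- The traceless Hermitian 2×2 matrix P(z,a) = !![z, a; conj a, −z]. -/
def Pm (z : ℝ) (a : Oct) : M2 := !![oR z, a; conj a, -oR z]

/-- The off-diagonal anti-Hermitian generator X_q = !![0, q; −conj q, 0]. -/
def Xm (q : Oct) : M2 := !![0, q; -conj q, 0]

/-- The diagonal generator D_q = !![q, 0; 0, −q]. -/
def Dm (q : Oct) : M2 := !![q, 0; 0, -q]

/-- The adjoint action ad_A : P ↦ AP − PA (entrywise octonion multiplication). -/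
def ad (A : M2) : M2 → M2 := fun P => A * P - P * A

/-- The bracket of operators, [S,T] = S∘T − T∘S. -/
def br (S T : M2 → M2) : M2 → M2 := fun P => S (T P) - T (S P)

namespace Oct

lemma mul_fst (x y : Oct) : (x * y).1 = x.1 * y.1 - star y.2 * x.2 := rfl
lemma mul_snd (x y : Oct) : (x * y).2 = y.2 * x.1 + x.2 * star y.1 := rfl
lemma add_fst (x y : Oct) : (x + y).1 = x.1 + y.1 := rfl
lemma add_snd (x y : Oct) : (x + y).2 = x.2 + y.2 := rfl
lemma sub_fst (x y : Oct) : (x - y).1 = x.1 - y.1 := rfl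
lemma sub_snd (x y : Oct) : (x - y).2 = x.2 - y.2 := rfl
lemma neg_fst (x : Oct) : (-x).1 = -x.1 := rfl
lemma neg_snd (x : Oct) : (-x).2 = -x.2 := rfl
lemma smul_fst' (r : ℝ) (x : Oct) : (r • x).1 = r • x.1 := rfl
lemma smul_snd' (r : ℝ) (x : Oct) : (r • x).2 = r • x.2 := rfl
lemma zero_fst : (0 : Oct).1 = 0 := rfl
lemma zero_snd : (0 : Oct).2 = 0 := rfl
lemma conj_fst (x : Oct) : (conj x).1 = star x.1 := rfl
lemma conj_snd (x : Oct) : (conj x).2 = -x.2 := rfl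
lemma re_def' (x : Oct) : re x = (x.1).re := rfl
lemma oR_fst (r : ℝ) : (oR r).1 = algebraMap ℝ H r := rfl
lemma oR_snd (r : ℝ) : (oR r).2 = 0 := rfl
lemma oct_ext_iff (x y : Oct) : x = y ↔ x.1 = y.1 ∧ x.2 = y.2 := Prod.ext_iff

lemma isIm_re (p : Oct) (hp : IsIm p) : (p.1).re = 0 := by
  have h1 := congrArg (fun x : Oct => (x.1).re) hp
  simp only [conj_fst, neg_fst, Quaternion.re_star, Quaternion.re_neg] at h1
  linarith

lemma oinner_comm (x y : Oct) : oinner x y = oinner y x := by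
  unfold oinner; rw [add_comm]

lemma oinner_self (x : Oct) : oinner x x = N x := by
  unfold oinner N
  rw [re_def', re_def', add_fst]
  simp only [Quaternion.re_add]
  ring

lemma Pm_zero : Pm 0 0 = 0 := by
  ext i j
  fin_cases i <;> fin_cases j <;>
    simp [Pm, oct_ext_iff, conj_fst, conj_snd, oR_fst, oR_snd, zero_fst, zero_snd,
      neg_fst, neg_snd]

lemma sub2 (a b c d e f g h : Oct) :
    (!![a,b;c,d] : M2) - !![e,f;g,h] = !![a-e, b-f; c-g, d-h] := by
  ext i j; fin_cases i <;> fin_cases j <;> simp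

lemma smul2 (r : ℝ) (a b c d : Oct) :
    r • (!![a,b;c,d] : M2) = !![r•a, r•b; r•c, r•d] := by
  ext i j; fin_cases i <;> fin_cases j <;> simp

lemma eq2 (a b c d e f g h : Oct) :
    (!![a,b;c,d] : M2) = !![e,f;g,h] ↔ a = e ∧ b = f ∧ c = g ∧ d = h := by
  rw [← Matrix.ext_iff, Fin.forall_fin_two]
  simp [Fin.forall_fin_two, and_assoc]

set_option maxHeartbeats 8000000 in
lemma key (p q : Oct) (hp : IsIm p) (hq : IsIm q) (z : ℝ) (a : Oct) :
    (1/2 : ℝ) • br (ad (Xm p)) (ad (Xm q)) (Pm z a)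
      = Pm 0 ((2 * oinner p a) • q - (2 * oinner q a) • p) := by
  have hp1 := isIm_re p hp
  have hq1 := isIm_re q hq
  simp only [br, ad, Pm, Xm, Matrix.mul_fin_two, sub2, smul2, eq2, oinner, re_def']
  simp only [oct_ext_iff, mul_fst, mul_snd, add_fst, add_snd, sub_fst, sub_snd,
    neg_fst, neg_snd, smul_fst', smul_snd', zero_fst, zero_snd, conj_fst, conj_snd,
    oR_fst, oR_snd]
  and_intros <;> simp only [Quaternion.ext_iff, Quaternion.re_mul, Quaternion.imI_mul,
    Quaternion.imJ_mul,
    Quaternion.imK_mul, Quaternion.re_add, Quaternion.imI_add, Quaternion.imJ_add,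
    Quaternion.imK_add, Quaternion.re_sub, Quaternion.imI_sub, Quaternion.imJ_sub,
    Quaternion.imK_sub, Quaternion.re_neg, Quaternion.imI_neg, Quaternion.imJ_neg,
    Quaternion.imK_neg, Quaternion.re_star, Quaternion.imI_star, Quaternion.imJ_star,
    Quaternion.imK_star, Quaternion.re_smul, Quaternion.imI_smul, Quaternion.imJ_smul,
    Quaternion.imK_smul, Quaternion.re_zero, Quaternion.imI_zero, Quaternion.imJ_zero,
    Quaternion.imK_zero, Quaternion.algebraMap_def, Quaternion.re_coe, Quaternion.imI_coe,
    Quaternion.imJ_coe, Quaternion.imK_coe, smul_eq_mul, hp1, hq1] <;>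
  first
    | trivial
    | ring1
    | (and_intros <;> first | trivial | ring1)

end Oct

/-- For all imaginary octonions p, q with ⟨p,q⟩ = 0 and all z ∈ ℝ, a ∈ 𝕆:
½·[ad_{X_p}, ad_{X_q}](P(z,a)) = P(0, 2(⟨p,a⟩q − ⟨q,a⟩p)).  In particular the
nested operator D_{p,q} := ½[ad_{X_p}, ad_{X_q}] annihilates P(z,a) whenever
⟨a,p⟩ = ⟨a,q⟩ = 0, and is an infinitesimal rotation in the (p,q)-plane. -/
theorem Dpq_action (p q : Oct) (hp : IsIm p) (hq : IsIm q) (hpq : oinner p q = 0) :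
    (∀ (z : ℝ) (a : Oct),
      (1/2 : ℝ) • br (ad (Xm p)) (ad (Xm q)) (Pm z a)
        = Pm 0 ((2 * oinner p a) • q - (2 * oinner q a) • p)) ∧
    (∀ (z : ℝ) (a : Oct), oinner a p = 0 → oinner a q = 0 →
      (1/2 : ℝ) • br (ad (Xm p)) (ad (Xm q)) (Pm z a) = 0) ∧
    (N p = 1 → N q = 1 →
      (1/2 : ℝ) • br (ad (Xm p)) (ad (Xm q)) (Pm 0 p) = Pm 0 ((2 : ℝ) • q) ∧
      (1/2 : ℝ) • br (ad (Xm p)) (ad (Xm q)) (Pm 0 q) = Pm 0 ((-2 : ℝ) • p)) := by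
  refine ⟨fun z a => key p q hp hq z a, fun z a hap haq => ?_, fun hNp hNq => ⟨?_, ?_⟩⟩
  · rw [key p q hp hq z a, oinner_comm p a, hap, oinner_comm q a, haq]
    simp [Pm_zero]
  · rw [key p q hp hq 0 p, oinner_self, hNp, oinner_comm q p, hpq]
    norm_num
  · rw [key p q hp hq 0 q, oinner_self, hNq, hpq]
    norm_num
end
end

section
/- For every imaginary octonion p, one has [ad_{X_1}, ad_{X_p}] = 2·ad_{D_p} as ℝ-linear operators on V, where X_1 is X_q with q = 1. -/
noncomputable section

open Oct

namespace Oct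
lemma mul_mk (a b c d : H) :
    (mk' a b) * (mk' c d) = mk' (a*c - star d*b) (d*a + b*star c) := rfl
lemma conj_mk (a b : H) : conj (mk' a b) = mk' (star a) (-b) := rfl
lemma add_mk (a b c d : H) : (mk' a b) + (mk' c d) = mk' (a+c) (b+d) := rfl
lemma sub_mk (a b c d : H) : (mk' a b) - (mk' c d) = mk' (a-c) (b-d) := rfl
lemma neg_mk (a b : H) : -(mk' a b) = mk' (-a) (-b) := rfl
lemma smul_mk (r : ℝ) (a b : H) : r • (mk' a b) = mk' (r•a) (r•b) := rfl
lemma one_def : (1 : Oct) = mk' 1 0 := rfl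
lemma zero_def : (0 : Oct) = mk' 0 0 := rfl
lemma mk'_inj {a b c d : H} : mk' a b = mk' c d ↔ a = c ∧ b = d := Prod.ext_iff
end Oct

lemma sub22 (a b c d e f g h : Oct) :
    !![a,b;c,d] - !![e,f;g,h] = !![a-e,b-f;c-g,d-h] := by
  ext i j; fin_cases i <;> fin_cases j <;> rfl

lemma smul22 (r : ℝ) (a b c d : Oct) :
    r • !![a,b;c,d] = !![r•a,r•b;r•c,r•d] := by
  ext i j; fin_cases i <;> fin_cases j <;> rfl

lemma eq22 {a b c d e f g h : Oct} (h1 : a = e) (h2 : b = f) (h3 : c = g) (h4 : d = h) :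
    !![a,b;c,d] = !![e,f;g,h] := by subst h1 h2 h3 h4; rfl

lemma Oct.pair_def (a b : H) : ((a, b) : Oct) = mk' a b := rfl
lemma Oct.re_mk (a b : H) : re (mk' a b) = a.re := rfl

set_option maxHeartbeats 1000000 in
lemma adX (q : Oct) (z : ℝ) (a : Oct) :
    ad (Xm q) (Pm z a) = Pm (2 * oinner q a) ((-(2*z)) • q) := by
  obtain ⟨q1, q2, rfl⟩ : ∃ q1 q2, q = mk' q1 q2 := ⟨q.1, q.2, rfl⟩
  obtain ⟨a1, a2, rfl⟩ : ∃ a1 a2, a = mk' a1 a2 := ⟨a.1, a.2, rfl⟩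
  simp only [ad, Xm, Pm, Matrix.mul_fin_two, sub22]
  apply eq22 <;>
  · simp only [oinner, oR, one_def, zero_def, Oct.pair_def, conj_mk, mul_mk, add_mk,
      sub_mk, neg_mk, smul_mk, re_mk, mk'_inj]
    constructor <;>
    · ext <;>
      · simp only [Quaternion.algebraMap_def, Quaternion.re_mul, Quaternion.imI_mul,
          Quaternion.imJ_mul, Quaternion.imK_mul, Quaternion.re_add, Quaternion.imI_add,
          Quaternion.imJ_add, Quaternion.imK_add, Quaternion.re_sub, Quaternion.imI_sub,
          Quaternion.imJ_sub, Quaternion.imK_sub, Quaternion.re_neg, Quaternion.imI_neg,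
          Quaternion.imJ_neg, Quaternion.imK_neg, Quaternion.re_star, Quaternion.imI_star,
          Quaternion.imJ_star, Quaternion.imK_star, Quaternion.re_smul, Quaternion.imI_smul,
          Quaternion.imJ_smul, Quaternion.imK_smul, Quaternion.re_one, Quaternion.imI_one,
          Quaternion.imJ_one, Quaternion.imK_one, Quaternion.re_zero, Quaternion.imI_zero,
          Quaternion.imJ_zero, Quaternion.imK_zero, Quaternion.re_coe, Quaternion.imI_coe,
          Quaternion.imJ_coe, Quaternion.imK_coe, smul_eq_mul]
        ring

set_option maxHeartbeats 1000000 in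
/-- For every imaginary octonion p, one has [ad_{X_1}, ad_{X_p}] = 2·ad_{D_p}
as ℝ-linear operators on V (i.e. on every P(z,a)), where X_1 is X_q with q = 1. -/
theorem bracket_X1_Xp (p : Oct) (hp : IsIm p) :
    ∀ (z : ℝ) (a : Oct),
      br (ad (Xm 1)) (ad (Xm p)) (Pm z a) = (2 : ℝ) • ad (Dm p) (Pm z a) := by
  intro z a
  show ad (Xm 1) (ad (Xm p) (Pm z a)) - ad (Xm p) (ad (Xm 1) (Pm z a)) = _
  rw [adX p z a, adX 1 z a, adX 1 _ _, adX p _ _]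
  obtain ⟨p1, p2, rfl⟩ : ∃ p1 p2, p = mk' p1 p2 := ⟨p.1, p.2, rfl⟩
  obtain ⟨a1, a2, rfl⟩ : ∃ a1 a2, a = mk' a1 a2 := ⟨a.1, a.2, rfl⟩
  have hp1 : star p1 = -p1 := congrArg Prod.fst hp
  have hre : p1.re = 0 := by
    have h := congrArg QuaternionAlgebra.re hp1
    simp only [Quaternion.re_star, Quaternion.re_neg] at h
    linarith
  simp only [ad, Dm, Pm, Matrix.mul_fin_two, sub22, smul22]
  apply eq22 <;>
  · simp only [oinner, oR, one_def, zero_def, Oct.pair_def, conj_mk, mul_mk, add_mk,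
      sub_mk, neg_mk, smul_mk, re_mk, mk'_inj, hp1]
    constructor <;>
    · ext <;>
      · simp only [Quaternion.algebraMap_def, Quaternion.re_mul, Quaternion.imI_mul,
          Quaternion.imJ_mul, Quaternion.imK_mul, Quaternion.re_add, Quaternion.imI_add,
          Quaternion.imJ_add, Quaternion.imK_add, Quaternion.re_sub, Quaternion.imI_sub,
          Quaternion.imJ_sub, Quaternion.imK_sub, Quaternion.re_neg, Quaternion.imI_neg,
          Quaternion.imJ_neg, Quaternion.imK_neg, Quaternion.re_star, Quaternion.imI_star,
          Quaternion.imJ_star, Quaternion.imK_star, Quaternion.re_smul, Quaternion.imI_smul,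
          Quaternion.imJ_smul, Quaternion.imK_smul, Quaternion.re_one, Quaternion.imI_one,
          Quaternion.imJ_one, Quaternion.imK_one, Quaternion.re_zero, Quaternion.imI_zero,
          Quaternion.imJ_zero, Quaternion.imK_zero, Quaternion.re_coe, Quaternion.imI_coe,
          Quaternion.imJ_coe, Quaternion.imK_coe, smul_eq_mul, hre]
        ring
end
end
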